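/- For every ϖ > 0, set S = √(ϖ·(ϖ+8)) and t = −3·ϖ²·(ϖ + S + 8)/(S·(ϖ + S)²). Then ϖ = 8·t²/(3·(2t+3)). -/

import Mathlib

/-- For every `ϖ > 0`, with `S = √(ϖ(ϖ+8))` and
`t = −3ϖ²(ϖ + S + 8)/(S(ϖ + S)²)`, one has `ϖ = 8t²/(3(2t+3))`
(the explicit inversion of the orthotoric coordinate `t(ϖ)` on the exceptional divisor
`WP[112]`). -/
theorem stmt_14 :
    ∀ ϖ : ℝ, 0 < ϖ →
      ϖ = 8 * (-3 * ϖ ^ 2 * (ϖ + Real.sqrt (ϖ * (ϖ + 8)) + 8) /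
            (Real.sqrt (ϖ * (ϖ + 8)) * (ϖ + Real.sqrt (ϖ * (ϖ + 8))) ^ 2)) ^ 2 /
          (3 * (2 * (-3 * ϖ ^ 2 * (ϖ + Real.sqrt (ϖ * (ϖ + 8)) + 8) /
            (Real.sqrt (ϖ * (ϖ + 8)) * (ϖ + Real.sqrt (ϖ * (ϖ + 8))) ^ 2)) + 3)) := by
  intro w hw
  set s := Real.sqrt (w * (w + 8)) with hsdef
  have hw8 : 0 < w * (w + 8) := by positivity
  have hs : 0 < s := Real.sqrt_pos.mpr hw8
  have hs2 : s ^ 2 = w * (w + 8) := Real.sq_sqrt hw8.le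
  have hws : 0 < w + s := by linarith
  have hd : s * (w + s) ^ 2 ≠ 0 := by positivity
  have key : 2 * (-3 * w ^ 2 * (w + s + 8) / (s * (w + s) ^ 2)) + 3
      = 24 * w / ((w + s) ^ 2) := by
    field_simp
    linear_combination (6*w + 3*s) * hs2
  rw [key]
  have h24 : (3 : ℝ) * (24 * w / (w + s) ^ 2) ≠ 0 := by positivity
  field_simp
  linear_combination 24*(s*(w+s) + w*(w+s+8)) * hs2
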